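/- For a=1, the eigenvalues of the Jacobian of F at (0,1) are -c(1-s) and -c(1-k)(1-s)+cs; consequently (0,1) is hyperbolic asymptotically stable if and only if s < (1-k)/(2-k). -/

import Mathlib

open Real Set Filter Topology

noncomputable def Fx1 (c k s x y : ℝ) : ℝ :=
  c * ((1 - x) * (1 - k) * s * (1 - y) - x * (1 - s) * (1 - x))

noncomputable def Fy1 (c k s x y : ℝ) : ℝ :=
  c * ((1 - y) * (1 - k) * (1 - s) * (1 - x) - y * s * (1 - y))

theorem stmt_11 (c k s : ℝ) (hc : 0 < c)
    (hk : k ∈ Ioo (0:ℝ) 1) (hs : s ∈ Ioo (0:ℝ) 1) :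
    HasFDerivAt (fun p : ℝ × ℝ => (Fx1 c k s p.1 p.2, Fy1 c k s p.1 p.2))
      ((((-(c * (1 - s))) • ContinuousLinearMap.fst ℝ ℝ ℝ +
          (-(c * (1 - k) * s)) • ContinuousLinearMap.snd ℝ ℝ ℝ).prod
        ((-(c * (1 - k) * (1 - s)) + c * s) • ContinuousLinearMap.snd ℝ ℝ ℝ)) :
        ℝ × ℝ →L[ℝ] ℝ × ℝ)
      ((0 : ℝ), (1 : ℝ)) ∧
    ((-(c * (1 - s)) < 0 ∧ -(c * (1 - k) * (1 - s)) + c * s < 0) ↔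
      s < (1 - k) / (2 - k)) := by
  obtain ⟨hk0, hk1⟩ := hk
  obtain ⟨hs0, hs1⟩ := hs
  constructor
  · have hu : HasFDerivAt (fun p : ℝ × ℝ => p.1)
        (ContinuousLinearMap.fst ℝ ℝ ℝ) ((0:ℝ), (1:ℝ)) := hasFDerivAt_fst
    have hv : HasFDerivAt (fun p : ℝ × ℝ => p.2)
        (ContinuousLinearMap.snd ℝ ℝ ℝ) ((0:ℝ), (1:ℝ)) := hasFDerivAt_snd
    have h1x := (hasFDerivAt_const (1:ℝ) ((0:ℝ), (1:ℝ))).sub hu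
    have h1y := (hasFDerivAt_const (1:ℝ) ((0:ℝ), (1:ℝ))).sub hv
    have hfx : HasFDerivAt (fun p : ℝ × ℝ => Fx1 c k s p.1 p.2)
        ((-(c * (1 - s))) • ContinuousLinearMap.fst ℝ ℝ ℝ +
          (-(c * (1 - k) * s)) • ContinuousLinearMap.snd ℝ ℝ ℝ) ((0:ℝ), (1:ℝ)) := by
      have H := ((((h1x.mul_const (1 - k)).mul_const s).mul h1y).sub
          ((hu.mul_const (1 - s)).mul h1x)).const_mul c
      simp only [Fx1]
      refine H.congr_fderiv ?_
      refine ContinuousLinearMap.ext fun x => ?_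
      simp
      ring
    have hfy : HasFDerivAt (fun p : ℝ × ℝ => Fy1 c k s p.1 p.2)
        ((-(c * (1 - k) * (1 - s)) + c * s) • ContinuousLinearMap.snd ℝ ℝ ℝ) ((0:ℝ), (1:ℝ)) := by
      have H := ((((h1y.mul_const (1 - k)).mul_const (1 - s)).mul h1x).sub
          ((hv.mul_const s).mul h1y)).const_mul c
      simp only [Fy1]
      refine H.congr_fderiv ?_
      refine ContinuousLinearMap.ext fun x => ?_
      simp
      ring
    exact HasFDerivAt.prodMk hfx hfy
  · have h2k : (0:ℝ) < 2 - k := by linarith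
    rw [lt_div_iff₀ h2k]
    constructor
    · rintro ⟨-, h⟩
      nlinarith
    · intro h
      constructor
      · nlinarith
      · nlinarith
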